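/- For ζ = x + iy ∈ ℂ and q = e^{iπτ} with τ in the upper half plane, Σ_{i=1}^4 ϑᵢ(ζ|τ)·ϑᵢ(ζ̄|τ) = 2·ϑ₃(2x|2τ)·ϑ₃(iy|τ/2), where ϑᵢ(ζ|τ) = ϑᵢ(ζ, e^{iπτ}) are the four Jacobi theta functions defined by their Fourier series. -/
import Mathlib

open Complex

/-- `ϑ₁(ζ|τ)`. -/
noncomputable def theta1 (ζ τ : ℂ) : ℂ :=
  ∑' k : ℤ, (-1 : ℂ) ^ k * Complex.I * Complex.exp ((2 * (k : ℂ) + 1) * Complex.I * ζ) *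
    Complex.exp ((Real.pi : ℂ) * Complex.I * τ * ((k : ℂ) + 1 / 2) ^ 2)

/-- `ϑ₂(ζ|τ)`. -/
noncomputable def theta2 (ζ τ : ℂ) : ℂ :=
  ∑' k : ℤ, Complex.exp ((2 * (k : ℂ) + 1) * Complex.I * ζ) *
    Complex.exp ((Real.pi : ℂ) * Complex.I * τ * ((k : ℂ) + 1 / 2) ^ 2)

/-- `ϑ₃(ζ|τ)`. -/
noncomputable def theta3 (ζ τ : ℂ) : ℂ :=
  ∑' k : ℤ, Complex.exp (2 * (k : ℂ) * Complex.I * ζ) *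
    Complex.exp ((Real.pi : ℂ) * Complex.I * τ * (k : ℂ) ^ 2)

/-- `ϑ₄(ζ|τ)`. -/
noncomputable def theta4 (ζ τ : ℂ) : ℂ :=
  ∑' k : ℤ, (-1 : ℂ) ^ k * Complex.exp (2 * (k : ℂ) * Complex.I * ζ) *
    Complex.exp ((Real.pi : ℂ) * Complex.I * τ * (k : ℂ) ^ 2)

/-- Canonical theta-type term `exp (π i τ k² + a k + b)`. -/
noncomputable def thT (τ a b : ℂ) (k : ℤ) : ℂ :=
  Complex.exp ((Real.pi : ℂ) * Complex.I * τ * (k : ℂ) ^ 2 + a * (k : ℂ) + b)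

lemma summable_norm_thT (τ : ℂ) (hτ : 0 < τ.im) (a b : ℂ) :
    Summable fun k : ℤ => ‖thT τ a b k‖ := by
  have h : ∀ k : ℤ, thT τ a b k
      = Complex.exp b * jacobiTheta₂_term k (a / (2 * ↑Real.pi * Complex.I)) τ := by
    intro k
    rw [jacobiTheta₂_term, thT, ← Complex.exp_add]
    congr 1
    have hπ : (Real.pi : ℂ) ≠ 0 := by exact_mod_cast Real.pi_ne_zero
    field_simp
    ring
  refine summable_norm_iff.mpr ?_
  exact Summable.congr (((summable_jacobiTheta₂_term_iff _ τ).mpr hτ).mul_left _)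
    fun k => (h k).symm

lemma exp_half_odd (k : ℤ) :
    Complex.exp ((k : ℂ) * (↑Real.pi * Complex.I) + ↑Real.pi * Complex.I / 2)
      = (-1 : ℂ) ^ k * Complex.I := by
  rw [Complex.exp_add, Complex.exp_int_mul, Complex.exp_pi_mul_I]
  congr 1
  rw [show (↑Real.pi * Complex.I / 2 : ℂ) = ↑(Real.pi / 2) * Complex.I by push_cast; ring,
    Complex.exp_mul_I]
  simp

lemma exp_int_pi (k : ℤ) :
    Complex.exp ((k : ℂ) * (↑Real.pi * Complex.I)) = (-1 : ℂ) ^ k := by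
  rw [Complex.exp_int_mul, Complex.exp_pi_mul_I]

lemma theta1_eq (ζ τ : ℂ) : theta1 ζ τ =
    ∑' k : ℤ, thT τ (2 * Complex.I * ζ + ↑Real.pi * Complex.I * τ + ↑Real.pi * Complex.I)
      (Complex.I * ζ + ↑Real.pi * Complex.I * τ / 4 + ↑Real.pi * Complex.I / 2) k := by
  refine tsum_congr fun k => ?_
  rw [thT, show (Real.pi : ℂ) * Complex.I * τ * (k : ℂ) ^ 2 +
      (2 * Complex.I * ζ + ↑Real.pi * Complex.I * τ + ↑Real.pi * Complex.I) * (k : ℂ) +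
      (Complex.I * ζ + ↑Real.pi * Complex.I * τ / 4 + ↑Real.pi * Complex.I / 2)
      = ((k : ℂ) * (↑Real.pi * Complex.I) + ↑Real.pi * Complex.I / 2)
        + ((2 * (k : ℂ) + 1) * Complex.I * ζ)
        + ((Real.pi : ℂ) * Complex.I * τ * ((k : ℂ) + 1 / 2) ^ 2) by ring,
    Complex.exp_add, Complex.exp_add, exp_half_odd]

lemma theta2_eq (ζ τ : ℂ) : theta2 ζ τ =
    ∑' k : ℤ, thT τ (2 * Complex.I * ζ + ↑Real.pi * Complex.I * τ)
      (Complex.I * ζ + ↑Real.pi * Complex.I * τ / 4) k := by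
  refine tsum_congr fun k => ?_
  rw [thT, show (Real.pi : ℂ) * Complex.I * τ * (k : ℂ) ^ 2 +
      (2 * Complex.I * ζ + ↑Real.pi * Complex.I * τ) * (k : ℂ) +
      (Complex.I * ζ + ↑Real.pi * Complex.I * τ / 4)
      = ((2 * (k : ℂ) + 1) * Complex.I * ζ)
        + ((Real.pi : ℂ) * Complex.I * τ * ((k : ℂ) + 1 / 2) ^ 2) by ring,
    Complex.exp_add]

lemma theta3_eq (ζ τ : ℂ) : theta3 ζ τ =
    ∑' k : ℤ, thT τ (2 * Complex.I * ζ) 0 k := by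
  refine tsum_congr fun k => ?_
  rw [thT, show (Real.pi : ℂ) * Complex.I * τ * (k : ℂ) ^ 2 +
      2 * Complex.I * ζ * (k : ℂ) + 0
      = (2 * (k : ℂ) * Complex.I * ζ)
        + ((Real.pi : ℂ) * Complex.I * τ * (k : ℂ) ^ 2) by ring,
    Complex.exp_add]

lemma theta4_eq (ζ τ : ℂ) : theta4 ζ τ =
    ∑' k : ℤ, thT τ (2 * Complex.I * ζ + ↑Real.pi * Complex.I) 0 k := by
  refine tsum_congr fun k => ?_
  rw [thT, show (Real.pi : ℂ) * Complex.I * τ * (k : ℂ) ^ 2 +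
      (2 * Complex.I * ζ + ↑Real.pi * Complex.I) * (k : ℂ) + 0
      = ((k : ℂ) * (↑Real.pi * Complex.I))
        + (2 * (k : ℂ) * Complex.I * ζ)
        + ((Real.pi : ℂ) * Complex.I * τ * (k : ℂ) ^ 2) by ring,
    Complex.exp_add, Complex.exp_add, exp_int_pi]

/-- Reindexing for the left-hand side: pairs with even sum and odd sum. -/
def reL : (ℤ × ℤ) ⊕ (ℤ × ℤ) ≃ ℤ × ℤ where
  toFun s := match s with
    | .inl (m, n) => (m + n, m - n)
    | .inr (m, n) => (m + n, m - n - 1)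
  invFun p := if Even (p.1 + p.2) then .inl ((p.1 + p.2) / 2, (p.1 - p.2) / 2)
    else .inr ((p.1 + p.2 + 1) / 2, (p.1 - p.2 - 1) / 2)
  left_inv s := by
    rcases s with ⟨m, n⟩ | ⟨m, n⟩ <;> dsimp only
    · rw [if_pos ⟨m, by omega⟩]
      simp only [Sum.inl.injEq, Prod.mk.injEq, true_and, and_true]
      omega
    · rw [if_neg (by rintro ⟨r, hr⟩; omega)]
      simp only [Sum.inr.injEq, Prod.mk.injEq, true_and, and_true]
      omega
  right_inv p := by
    obtain ⟨k, l⟩ := p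
    dsimp only
    by_cases h : Even (k + l)
    · rw [if_pos h]
      obtain ⟨r, hr⟩ := h
      simp only [Prod.mk.injEq, true_and, and_true]
      omega
    · rw [if_neg h]
      rw [Int.not_even_iff_odd] at h
      obtain ⟨r, hr⟩ := h
      simp only [Prod.mk.injEq, true_and, and_true]
      omega

/-- Reindexing for the right-hand side: even and odd second coordinate. -/
def reR : (ℤ × ℤ) ⊕ (ℤ × ℤ) ≃ ℤ × ℤ where
  toFun s := match s with
    | .inl (m, n) => (m, 2 * n)
    | .inr (m, n) => (m, 2 * n + 1)
  invFun p := if Even p.2 then .inl (p.1, p.2 / 2) else .inr (p.1, (p.2 - 1) / 2)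
  left_inv s := by
    rcases s with ⟨m, n⟩ | ⟨m, n⟩ <;> dsimp only
    · rw [if_pos ⟨n, by omega⟩]
      simp only [Sum.inl.injEq, Prod.mk.injEq, true_and, and_true]
      omega
    · rw [if_neg (by rintro ⟨r, hr⟩; omega)]
      simp only [Sum.inr.injEq, Prod.mk.injEq, true_and, and_true]
      omega
  right_inv p := by
    obtain ⟨k, l⟩ := p
    dsimp only
    by_cases h : Even l
    · rw [if_pos h]
      obtain ⟨r, hr⟩ := h
      simp only [Prod.mk.injEq, true_and, and_true]
      omega
    · rw [if_neg h]
      rw [Int.not_even_iff_odd] at h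
      obtain ⟨r, hr⟩ := h
      simp only [Prod.mk.injEq, true_and, and_true]
      omega

/-- For `ζ = x + iy` and `τ` in the upper half plane,
`Σ_{i=1}^4 ϑᵢ(ζ|τ)ϑᵢ(ζ̄|τ) = 2 ϑ₃(2x|2τ) ϑ₃(iy|τ/2)`. -/
theorem sum_theta_products (x y : ℝ) (τ : ℂ) (hτ : 0 < τ.im) :
    theta1 ((x : ℂ) + (y : ℂ) * Complex.I) τ * theta1 ((x : ℂ) - (y : ℂ) * Complex.I) τ +
      theta2 ((x : ℂ) + (y : ℂ) * Complex.I) τ * theta2 ((x : ℂ) - (y : ℂ) * Complex.I) τ +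
      theta3 ((x : ℂ) + (y : ℂ) * Complex.I) τ * theta3 ((x : ℂ) - (y : ℂ) * Complex.I) τ +
      theta4 ((x : ℂ) + (y : ℂ) * Complex.I) τ * theta4 ((x : ℂ) - (y : ℂ) * Complex.I) τ =
    2 * theta3 (2 * (x : ℂ)) (2 * τ) * theta3 (Complex.I * (y : ℂ)) (τ / 2) := by
  have h2τ : 0 < (2 * τ).im := by
    rw [Complex.mul_im]
    norm_num
    linarith
  have hτ2 : 0 < (τ / 2).im := by
    rw [Complex.div_im]
    norm_num
    positivity
  have sm : ∀ a b a' b' : ℂ, Summable fun z : ℤ × ℤ => thT τ a b z.1 * thT τ a' b' z.2 :=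
    fun a b a' b' => summable_mul_of_summable_norm
      (summable_norm_thT τ hτ a b) (summable_norm_thT τ hτ a' b')
  rw [mul_assoc]
  simp only [theta1_eq, theta2_eq, theta3_eq, theta4_eq]
  rw [tsum_mul_tsum_of_summable_norm (summable_norm_thT τ hτ _ _) (summable_norm_thT τ hτ _ _),
    tsum_mul_tsum_of_summable_norm (summable_norm_thT τ hτ _ _) (summable_norm_thT τ hτ _ _),
    tsum_mul_tsum_of_summable_norm (summable_norm_thT τ hτ _ _) (summable_norm_thT τ hτ _ _),
    tsum_mul_tsum_of_summable_norm (summable_norm_thT τ hτ _ _) (summable_norm_thT τ hτ _ _),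
    tsum_mul_tsum_of_summable_norm (summable_norm_thT (2 * τ) h2τ _ _)
      (summable_norm_thT (τ / 2) hτ2 _ _),
    ← tsum_mul_left,
    ← Summable.tsum_add (sm _ _ _ _) (sm _ _ _ _),
    ← Summable.tsum_add ((sm _ _ _ _).add (sm _ _ _ _)) (sm _ _ _ _),
    ← Summable.tsum_add (((sm _ _ _ _).add (sm _ _ _ _)).add (sm _ _ _ _)) (sm _ _ _ _),
    ← Equiv.tsum_eq reL, ← Equiv.tsum_eq reR]
  refine tsum_congr fun s => ?_
  rcases s with ⟨m, n⟩ | ⟨m, n⟩ <;>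
    simp only [reL, reR, Equiv.coe_fn_mk, thT, ← Complex.exp_add]
  · have key : ∀ u₁ u₂ u₃ u₄ v : ℂ,
        u₁ = u₂ + ((m : ℂ) * (2 * ↑Real.pi * Complex.I) + ↑Real.pi * Complex.I) →
        u₄ = u₃ + (m : ℂ) * (2 * ↑Real.pi * Complex.I) →
        u₃ = v →
        Complex.exp u₁ + Complex.exp u₂ + Complex.exp u₃ + Complex.exp u₄
          = 2 * Complex.exp v := by
      intro u₁ u₂ u₃ u₄ v h1 h4 h3
      subst h1 h4 h3
      rw [Complex.exp_add, Complex.exp_add, Complex.exp_add,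
        Complex.exp_int_mul_two_pi_mul_I, Complex.exp_pi_mul_I]
      ring
    exact key _ _ _ _ _ (by push_cast; ring) (by push_cast; ring) (by push_cast; ring)
  · have key : ∀ u₁ u₂ u₃ u₄ v : ℂ,
        u₁ = u₂ + (m : ℂ) * (2 * ↑Real.pi * Complex.I) →
        u₄ = u₃ + (((m - 1 : ℤ) : ℂ) * (2 * ↑Real.pi * Complex.I) + ↑Real.pi * Complex.I) →
        u₂ = v →
        Complex.exp u₁ + Complex.exp u₂ + Complex.exp u₃ + Complex.exp u₄
          = 2 * Complex.exp v := by
      intro u₁ u₂ u₃ u₄ v h1 h4 h2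
      subst h1 h4 h2
      rw [Complex.exp_add, Complex.exp_add, Complex.exp_add,
        Complex.exp_int_mul_two_pi_mul_I, Complex.exp_int_mul_two_pi_mul_I,
        Complex.exp_pi_mul_I]
      ring
    exact key _ _ _ _ _ (by push_cast; ring) (by push_cast; ring) (by push_cast; ring)
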